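/- Let Z be a standard complex Gaussian, \sigma_n = \sqrt{n(n+1)/3}, and N = 2\lfloor n^{2-\epsilon}/2 \rfloor for a fixed \epsilon \in (0, 1/10). Then as n \to \infty, for any interval [a,b] \subset \mathbb{R}, \int_{\mathbb{C}} e^{-|w|^2} P(|Re(Z)| \leq \pi \sigma_n |w| / N) \cdot P(Im(Z) \in [a/n, b/n]) dm(w)/\pi = \sqrt{\pi/3} \cdot (b-a)/N + o(1/N). -/

import Mathlib

open MeasureTheory ProbabilityTheory Real Filter Asymptotics Topology

noncomputable def gpdf (x : ℝ) : ℝ := (Real.sqrt π)⁻¹ * Real.exp (-x^2)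

lemma gpdf_eq : gaussianPDFReal 0 (1/2) = gpdf := by
  ext x
  simp only [gaussianPDFReal, gpdf]
  norm_num
  have h2 : Real.sqrt 2 ≠ 0 := by positivity
  field_simp

lemma gpdf_nonneg (x : ℝ) : 0 ≤ gpdf x := by
  unfold gpdf; positivity

lemma gpdf_cont : Continuous gpdf := by
  unfold gpdf; continuity

lemma gpdf_le (x : ℝ) : gpdf x ≤ (Real.sqrt π)⁻¹ := by
  unfold gpdf
  have h1 : Real.exp (-x^2) ≤ 1 := by
    rw [Real.exp_le_one_iff]; linarith [sq_nonneg x]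
  have h2 : (0:ℝ) ≤ (Real.sqrt π)⁻¹ := by positivity
  nlinarith

lemma gauss_set (s : Set ℝ) : ((gaussianReal 0 (1/2)) s).toReal = ∫ x in s, gpdf x := by
  rw [gaussianReal_apply_eq_integral 0 (by norm_num) s, ENNReal.toReal_ofReal
    (integral_nonneg (fun x => gaussianPDFReal_nonneg _ _ _)), gpdf_eq]

lemma gauss_Icc (c d : ℝ) (h : c ≤ d) :
    ((gaussianReal 0 (1/2)) (Set.Icc c d)).toReal = ∫ x in c..d, gpdf x := by
  rw [gauss_set, intervalIntegral.integral_of_le h, ← integral_Icc_eq_integral_Ioc]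

lemma gauss_abs (r : ℝ) (hr : 0 ≤ r) :
    ((gaussianReal 0 (1/2)) {x : ℝ | |x| ≤ r}).toReal = ∫ x in (-r)..r, gpdf x := by
  have hs : {x : ℝ | |x| ≤ r} = Set.Icc (-r) r := by ext x; simp [abs_le]
  rw [hs, gauss_Icc _ _ (by linarith)]

lemma sqrtpi_pos : 0 < Real.sqrt π := Real.sqrt_pos.mpr pi_pos

lemma key_est (c d M : ℝ) (h : c ≤ d) (hM : ∀ x ∈ Set.Icc c d, x^2 ≤ M) :
    |(∫ x in c..d, gpdf x) - (d - c) / Real.sqrt π| ≤ (d - c) * M / Real.sqrt π := by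
  have h1 : (d - c) / Real.sqrt π = ∫ _x in c..d, (Real.sqrt π)⁻¹ := by
    rw [intervalIntegral.integral_const, smul_eq_mul, div_eq_mul_inv]
  rw [h1, ← intervalIntegral.integral_sub (gpdf_cont.intervalIntegrable c d)
    (intervalIntegrable_const)]
  have hM0 : 0 ≤ M := le_trans (sq_nonneg c) (hM c ⟨le_refl c, h⟩)
  have key : ∀ x ∈ Set.uIoc c d, ‖gpdf x - (Real.sqrt π)⁻¹‖ ≤ M / Real.sqrt π := by
    intro x hx
    rw [Set.uIoc_of_le h] at hx
    have hx' : x ∈ Set.Icc c d := ⟨hx.1.le, hx.2⟩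
    have hb : x^2 ≤ M := hM x hx'
    have he1 : Real.exp (-x^2) ≤ 1 := by
      rw [Real.exp_le_one_iff]; linarith [sq_nonneg x]
    have he2 : 1 - x^2 ≤ Real.exp (-x^2) := by
      have := Real.add_one_le_exp (-x^2); linarith
    have hs := sqrtpi_pos
    rw [Real.norm_eq_abs, abs_le]
    have hi : (0:ℝ) < (Real.sqrt π)⁻¹ := inv_pos.mpr hs
    rw [div_eq_mul_inv]
    unfold gpdf
    constructor
    · nlinarith [mul_le_mul_of_nonneg_right he2 hi.le, mul_le_mul_of_nonneg_right hb hi.le]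
    · nlinarith [mul_le_mul_of_nonneg_right he1 hi.le, mul_le_mul_of_nonneg_right hb hi.le,
        mul_le_mul_of_nonneg_right hM0 hi.le]
  have := intervalIntegral.norm_integral_le_of_norm_le_const key
  rw [Real.norm_eq_abs] at this
  calc |∫ x in c..d, (gpdf x - (Real.sqrt π)⁻¹)| ≤ M / Real.sqrt π * |d - c| := this
    _ = (d - c) * M / Real.sqrt π := by
        rw [abs_of_nonneg (by linarith : (0:ℝ) ≤ d - c)]; ring

lemma gauss_integral_le (c d : ℝ) (h : c ≤ d) :
    (∫ x in c..d, gpdf x) ≤ (d - c) / Real.sqrt π := by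
  have := intervalIntegral.integral_mono_on h (gpdf_cont.intervalIntegrable c d)
    (intervalIntegrable_const (c := (Real.sqrt π)⁻¹) (μ := volume)) (fun x _ => gpdf_le x)
  rwa [intervalIntegral.integral_const, smul_eq_mul, ← div_eq_mul_inv] at this

lemma gauss_integral_nonneg (c d : ℝ) (h : c ≤ d) : 0 ≤ ∫ x in c..d, gpdf x :=
  intervalIntegral.integral_nonneg h (fun x _ => gpdf_nonneg x)

lemma gauss_abs_mono : Monotone (fun r => ((gaussianReal 0 (1/2)) {x : ℝ | |x| ≤ r}).toReal) := by
  intro r s hrs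
  exact ENNReal.toReal_mono (measure_ne_top _ _)
    (measure_mono (fun x hx => le_trans hx hrs))

lemma integrable_bound : Integrable (fun w : ℂ => Real.exp (-‖w‖ ^ 2) * ‖w‖) := by
  have h1 : Integrable (fun v : ℂ =>
      Complex.exp (-(1/2 : ℂ) * (‖v‖:ℂ)^2 + 0 * (inner ℝ (0:ℂ) v : ℝ))) :=
    GaussianFourier.integrable_cexp_neg_mul_sq_norm_add (by norm_num) 0 0
  have h2 := h1.norm
  have h3 : Integrable (fun v : ℂ => Real.exp (-(1/2) * ‖v‖^2)) := by
    refine h2.congr (Filter.Eventually.of_forall (fun v => ?_))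
    show ‖Complex.exp _‖ = _
    have hz : (-(1/2 : ℂ) * (‖v‖:ℂ)^2 + 0 * (((inner ℝ (0:ℂ) v : ℝ)):ℂ))
        = ((-(1/2) * ‖v‖^2 : ℝ) : ℂ) := by push_cast; ring
    rw [hz, Complex.norm_exp, Complex.ofReal_re]
  refine (h3.const_mul 1).mono' ?_ (Filter.Eventually.of_forall (fun w => ?_))
  · exact ((Real.continuous_exp.comp (continuous_pow 2 |>.comp continuous_norm).neg).mul
      continuous_norm).aestronglyMeasurable
  · rw [Real.norm_eq_abs, one_mul]
    have h0 : (0:ℝ) ≤ ‖w‖ := norm_nonneg w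
    rw [abs_of_nonneg (by positivity)]
    set x := ‖w‖
    have : x ≤ Real.exp (x^2/2) := by nlinarith [Real.add_one_le_exp (x^2/2), sq_nonneg (x-1)]
    calc Real.exp (-x^2) * x ≤ Real.exp (-x^2) * Real.exp (x^2/2) := by
          apply mul_le_mul_of_nonneg_left this (Real.exp_nonneg _)
      _ = Real.exp (-(1/2) * x^2) := by rw [← Real.exp_add]; ring_nf

lemma integral_val : ∫ w : ℂ, Real.exp (-‖w‖ ^ 2) * ‖w‖
    = π * Real.sqrt π / 2 := by
  have h := Complex.integral_rpow_mul_exp_neg_rpow (p := 2) (q := 1) one_le_two (by norm_num)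
  have e1 : ∀ x : ℂ, ‖x‖ ^ (1:ℝ) * Real.exp (-‖x‖ ^ (2:ℝ))
      = Real.exp (-‖x‖ ^ 2) * ‖x‖ := by
    intro x
    rw [Real.rpow_one, show ((2:ℝ)) = ((2:ℕ):ℝ) by norm_num, Real.rpow_natCast]
    ring
  simp_rw [e1] at h
  rw [h]
  have hG : Real.Gamma (((1:ℝ)+2)/2) = Real.sqrt π / 2 := by
    rw [show ((1:ℝ)+2)/2 = 1/2 + 1 by norm_num, Real.Gamma_add_one (by norm_num),
      Real.Gamma_one_half_eq]
    ring
  rw [hG]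
  ring

noncomputable def Nf (ε : ℝ) (n : ℕ) : ℝ := 2 * (⌊(n : ℝ) ^ ((2 : ℝ) - ε) / 2⌋ : ℝ)
noncomputable def sg (n : ℕ) : ℝ := Real.sqrt ((n : ℝ) * ((n : ℝ) + 1) / 3)

lemma Nf_nonneg (ε : ℝ) (hε : ε < 2) (n : ℕ) : 0 ≤ Nf ε n := by
  unfold Nf
  have h1 : (0:ℝ) ≤ (n : ℝ) ^ ((2 : ℝ) - ε) / 2 := by positivity
  have h2 : (0:ℤ) ≤ ⌊(n : ℝ) ^ ((2 : ℝ) - ε) / 2⌋ := Int.floor_nonneg.mpr h1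
  have : (0:ℝ) ≤ (⌊(n : ℝ) ^ ((2 : ℝ) - ε) / 2⌋ : ℝ) := by exact_mod_cast h2
  linarith

lemma Nf_lb (ε : ℝ) (n : ℕ) : (n : ℝ) ^ ((2 : ℝ) - ε) - 2 ≤ Nf ε n := by
  unfold Nf
  have := Int.sub_one_lt_floor ((n : ℝ) ^ ((2 : ℝ) - ε) / 2)
  linarith

lemma Nf_ev2 (ε : ℝ) (hε' : ε ≤ 1) : ∀ᶠ n : ℕ in atTop, 2 ≤ Nf ε n := by
  filter_upwards [eventually_ge_atTop 2] with n hn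
  have hn2 : (2:ℝ) ≤ (n:ℝ) := by exact_mod_cast hn
  have h1 : (n:ℝ) ^ (1:ℝ) ≤ (n:ℝ) ^ ((2:ℝ) - ε) :=
    Real.rpow_le_rpow_of_exponent_le (by linarith) (by linarith)
  rw [Real.rpow_one] at h1
  have h2 : (1:ℝ) ≤ (n : ℝ) ^ ((2 : ℝ) - ε) / 2 := by linarith
  have h3 : (1:ℤ) ≤ ⌊(n : ℝ) ^ ((2 : ℝ) - ε) / 2⌋ := by
    rw [Int.le_floor]; exact_mod_cast h2
  have h4 : (1:ℝ) ≤ (⌊(n : ℝ) ^ ((2 : ℝ) - ε) / 2⌋ : ℝ) := by exact_mod_cast h3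
  unfold Nf; linarith

lemma sg_le (n : ℕ) (hn : 1 ≤ n) : sg n ≤ (n : ℝ) := by
  have hn1 : (1:ℝ) ≤ (n:ℝ) := by exact_mod_cast hn
  have h : sg n ≤ Real.sqrt ((n:ℝ)^2) := Real.sqrt_le_sqrt (by nlinarith)
  rwa [Real.sqrt_sq (by positivity)] at h

lemma sg_tendsto : Tendsto (fun n : ℕ => sg n / n) atTop (𝓝 (Real.sqrt 3)⁻¹) := by
  have heq : ∀ᶠ n : ℕ in atTop, Real.sqrt ((1 + 1/(n:ℝ))/3) = sg n / n := by
    filter_upwards [eventually_ge_atTop 1] with n hn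
    have hn0 : (0:ℝ) < n := by exact_mod_cast hn
    unfold sg
    rw [show Real.sqrt ((n:ℝ)*((n:ℝ)+1)/3) / (n:ℝ)
        = Real.sqrt ((n:ℝ)*((n:ℝ)+1)/3) / Real.sqrt ((n:ℝ)^2) from by
      rw [Real.sqrt_sq hn0.le], ← Real.sqrt_div (by positivity)]
    congr 1
    field_simp
  have h0 : Tendsto (fun n : ℕ => (1 + 1/(n:ℝ))/3) atTop (𝓝 ((1+0)/3)) :=
    (tendsto_const_nhds.add tendsto_one_div_atTop_nhds_zero_nat).div_const 3
  have h1 := (Real.continuous_sqrt.tendsto _).comp h0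
  have h2 : Real.sqrt ((1+0)/3) = (Real.sqrt 3)⁻¹ := by
    norm_num [Real.sqrt_inv]
  rw [h2] at h1
  exact Tendsto.congr' heq h1

lemma hnN_tendsto (ε : ℝ) (hε : 0 < ε) (hε' : ε < 1) :
    Tendsto (fun n : ℕ => (n : ℝ) / Nf ε n) atTop (𝓝 0) := by
  have base : Tendsto (fun n : ℕ => (n:ℝ) ^ ((1:ℝ) - ε)) atTop atTop :=
    (tendsto_rpow_atTop (by linarith : (0:ℝ) < 1 - ε)).comp tendsto_natCast_atTop_atTop
  have base2 : Tendsto (fun n : ℕ => (n:ℝ) ^ ((1:ℝ) - ε) + (-1)) atTop atTop :=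
    tendsto_atTop_add_const_right _ (-1) base
  have hD : Tendsto (fun n : ℕ => (n:ℝ) ^ ((1:ℝ) - ε) - 2/(n:ℝ)) atTop atTop := by
    apply tendsto_atTop_mono' atTop ?_ base2
    filter_upwards [eventually_ge_atTop 2] with n hn
    have hn2 : (2:ℝ) ≤ (n:ℝ) := by exact_mod_cast hn
    have : 2/(n:ℝ) ≤ 1 := by rw [div_le_one (by linarith)]; linarith
    linarith
  have hDinv : Tendsto (fun n : ℕ => ((n:ℝ) ^ ((1:ℝ) - ε) - 2/(n:ℝ))⁻¹) atTop (𝓝 0) :=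
    tendsto_inv_atTop_zero.comp hD
  apply squeeze_zero' ?_ ?_ hDinv
  · filter_upwards [Nf_ev2 ε (by linarith)] with n hn
    have h0 := Nf_nonneg ε (by linarith) n
    positivity
  · filter_upwards [Nf_ev2 ε (by linarith), hD.eventually_ge_atTop 1,
      eventually_ge_atTop 1] with n hN hD1 hn1
    have hn0 : (0:ℝ) < n := by exact_mod_cast hn1
    have hNpos : (0:ℝ) < Nf ε n := by linarith
    have hDpos : (0:ℝ) < (n:ℝ) ^ ((1:ℝ) - ε) - 2/(n:ℝ) := by linarith
    have hmul : (n:ℝ) * ((n:ℝ)^((1:ℝ)-ε) - 2/(n:ℝ)) = (n:ℝ)^((2:ℝ)-ε) - 2 := by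
      have h2 : (n:ℝ)^((2:ℝ)-ε) = (n:ℝ)^(1:ℝ) * (n:ℝ)^((1:ℝ)-ε) := by
        rw [← Real.rpow_add hn0]; ring_nf
      rw [h2, Real.rpow_one]; field_simp
    rw [inv_eq_one_div, div_le_div_iff₀ hNpos hDpos]
    have := Nf_lb ε n
    nlinarith

lemma inv_sq_tendsto (C : ℝ) : Tendsto (fun n : ℕ => C / (n:ℝ)^2) atTop (𝓝 0) := by
  have he : ∀ n : ℕ, C / (n:ℝ)^2 = C * (1/(n:ℝ) * (1/(n:ℝ))) := by
    intro n; rw [pow_two]; field_simp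
  rw [funext he]
  have := (tendsto_one_div_atTop_nhds_zero_nat.mul
    tendsto_one_div_atTop_nhds_zero_nat).const_mul C
  simpa using this

lemma hA_tendsto (a b : ℝ) (hab : a ≤ b) :
    Tendsto (fun n : ℕ =>
      (n:ℝ) * ((gaussianReal 0 (1/2)) (Set.Icc (a/(n:ℝ)) (b/(n:ℝ)))).toReal)
      atTop (𝓝 ((b-a)/Real.sqrt π)) := by
  have hs := Real.sqrt_pos.mpr pi_pos
  set M' := max |a| |b| with hM'
  have key : ∀ᶠ n : ℕ in atTop,
      ‖(n:ℝ) * ((gaussianReal 0 (1/2)) (Set.Icc (a/(n:ℝ)) (b/(n:ℝ)))).toReal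
        - (b-a)/Real.sqrt π‖ ≤ (b-a) * M'^2 / Real.sqrt π / (n:ℝ)^2 := by
    filter_upwards [eventually_ge_atTop 1] with n hn
    have hn0 : (0:ℝ) < n := by exact_mod_cast hn
    have hle : a/(n:ℝ) ≤ b/(n:ℝ) := by gcongr
    have hMb : ∀ x ∈ Set.Icc (a/(n:ℝ)) (b/(n:ℝ)), x^2 ≤ (M'/(n:ℝ))^2 := by
      intro x hx
      apply sq_le_sq'
      · calc -(M'/(n:ℝ)) = (-M')/(n:ℝ) := by ring
          _ ≤ a/(n:ℝ) := by
              apply div_le_div_of_nonneg_right ?_ hn0.le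
              have : -M' ≤ -|a| := by simp [hM']
              linarith [neg_abs_le a]
          _ ≤ x := hx.1
      · calc x ≤ b/(n:ℝ) := hx.2
          _ ≤ M'/(n:ℝ) := by
              apply div_le_div_of_nonneg_right ?_ hn0.le
              exact le_trans (le_abs_self b) (le_max_right _ _)
    have hk := key_est (a/(n:ℝ)) (b/(n:ℝ)) ((M'/(n:ℝ))^2) hle hMb
    have e1 : (n:ℝ) * ((b/(n:ℝ) - a/(n:ℝ))/Real.sqrt π) = (b-a)/Real.sqrt π := by
      field_simp
    rw [gauss_Icc _ _ hle]
    calc ‖(n:ℝ) * (∫ x in a/(n:ℝ)..b/(n:ℝ), gpdf x) - (b-a)/Real.sqrt π‖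
        = (n:ℝ) * |(∫ x in a/(n:ℝ)..b/(n:ℝ), gpdf x)
            - (b/(n:ℝ) - a/(n:ℝ))/Real.sqrt π| := by
          rw [← e1, ← mul_sub, Real.norm_eq_abs, abs_mul, abs_of_pos hn0]
      _ ≤ (n:ℝ) * ((b/(n:ℝ) - a/(n:ℝ)) * ((M'/(n:ℝ))^2) / Real.sqrt π) :=
          mul_le_mul_of_nonneg_left hk hn0.le
      _ = (b-a) * M'^2 / Real.sqrt π / (n:ℝ)^2 := by
          field_simp
  have h0 := squeeze_zero_norm' key (inv_sq_tendsto ((b-a) * M'^2 / Real.sqrt π))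
  have h1 := h0.add_const ((b-a)/Real.sqrt π)
  simpa using h1

lemma P1_meas (ε : ℝ) (n : ℕ) : Measurable (fun w : ℂ =>
    ((gaussianReal 0 (1/2)) {x : ℝ | |x| ≤ π * sg n * ‖w‖ / Nf ε n}).toReal) :=
  gauss_abs_mono.measurable.comp
    (((continuous_const.mul continuous_norm).div_const (Nf ε n)).measurable)

lemma flim_integral (a b : ℝ) :
    ∫ w : ℂ, Real.exp (-‖w‖ ^ 2)
      * (2*π*(Real.sqrt 3)⁻¹*‖w‖/Real.sqrt π) * ((b-a)/Real.sqrt π) / π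
      = Real.sqrt (π/3)*(b-a) := by
  have hs := Real.sqrt_pos.mpr pi_pos
  have h3 : (0:ℝ) < Real.sqrt 3 := Real.sqrt_pos.mpr (by norm_num)
  have hmm : Real.sqrt π * Real.sqrt π = π := Real.mul_self_sqrt pi_pos.le
  have he : (fun w : ℂ => Real.exp (-‖w‖ ^ 2)
      * (2*π*(Real.sqrt 3)⁻¹*‖w‖/Real.sqrt π) * ((b-a)/Real.sqrt π) / π)
      = fun w : ℂ => (2*π*(Real.sqrt 3)⁻¹/Real.sqrt π * ((b-a)/Real.sqrt π) / π)
          * (Real.exp (-‖w‖ ^ 2) * ‖w‖) := by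
    funext w; ring
  rw [he, integral_const_mul, integral_val, Real.sqrt_div pi_pos.le]
  have hcube : Real.sqrt π ^ 3 = π * Real.sqrt π := by
    rw [pow_succ, Real.sq_sqrt pi_pos.le]
  field_simp
  ring_nf
  rw [Real.sq_sqrt pi_pos.le]
  ring

lemma B_est (Nv nv c P : ℝ) (hN : 0 < Nv) (hn : 0 < nv) (hc : 0 ≤ c)
    (hP : P = ∫ x in (-(c/Nv))..(c/Nv), gpdf x) :
    |Nv * P / nv - 2*c/(nv*Real.sqrt π)| ≤ 2*c/(nv*Real.sqrt π) * (c/Nv)^2 := by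
  have hs := Real.sqrt_pos.mpr pi_pos
  have hr0 : 0 ≤ c/Nv := by positivity
  have hk := key_est (-(c/Nv)) (c/Nv) ((c/Nv)^2) (by linarith)
    (fun x hx => sq_le_sq' hx.1 hx.2)
  have h2r : (c/Nv - -(c/Nv)) = 2*(c/Nv) := by ring
  rw [h2r] at hk
  have e1 : Nv * P / nv - 2*c/(nv*Real.sqrt π)
      = (Nv/nv) * ((∫ x in (-(c/Nv))..(c/Nv), gpdf x) - 2*(c/Nv)/Real.sqrt π) := by
    rw [hP]; field_simp
  have e2 : (Nv/nv) * (2*(c/Nv) * (c/Nv)^2 / Real.sqrt π)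
      = 2*c/(nv*Real.sqrt π) * (c/Nv)^2 := by
    field_simp
  rw [e1, abs_mul, abs_of_nonneg (by positivity : (0:ℝ) ≤ Nv/nv), ← e2]
  exact mul_le_mul_of_nonneg_left hk (by positivity)

/-- The Gaussian computation for the intensity: with `σ_n = √(n(n+1)/3)`,
`N = 2⌊n^{2-ε}/2⌋` and `Z` a standard complex Gaussian,
`∫_ℂ e^{-|w|²} P(|Re Z| ≤ πσ_n|w|/N) P(Im Z ∈ [a/n, b/n]) dm(w)/π = √(π/3)(b-a)/N + o(1/N)`. -/
theorem stmt_11 (ε : ℝ) (hε : 0 < ε) (hε' : ε < 1/10) (a b : ℝ) (hab : a ≤ b) :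
    (fun n : ℕ =>
        (∫ w : ℂ, Real.exp (-‖w‖ ^ 2) *
            ((gaussianReal 0 (1/2)) {x : ℝ | |x| ≤
                π * Real.sqrt ((n : ℝ) * ((n : ℝ) + 1) / 3) * ‖w‖ /
                  (2 * (⌊(n : ℝ) ^ ((2 : ℝ) - ε) / 2⌋ : ℝ))}).toReal *
            ((gaussianReal 0 (1/2)) (Set.Icc (a / (n : ℝ)) (b / (n : ℝ)))).toReal / π)
          - Real.sqrt (π / 3) * (b - a) / (2 * (⌊(n : ℝ) ^ ((2 : ℝ) - ε) / 2⌋ : ℝ)))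
      =o[atTop] fun n : ℕ => 1 / (2 * (⌊(n : ℝ) ^ ((2 : ℝ) - ε) / 2⌋ : ℝ)) := by
  have hev2 := Nf_ev2 ε (by linarith)
  have hsπ : (0:ℝ) < Real.sqrt π := Real.sqrt_pos.mpr pi_pos
  show (fun n : ℕ =>
      (∫ w : ℂ, Real.exp (-‖w‖ ^ 2) *
          ((gaussianReal 0 (1/2)) {x : ℝ | |x| ≤
              π * sg n * ‖w‖ / Nf ε n}).toReal *
          ((gaussianReal 0 (1/2)) (Set.Icc (a / (n : ℝ)) (b / (n : ℝ)))).toReal / π)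
        - Real.sqrt (π / 3) * (b - a) / Nf ε n)
    =o[atTop] fun n : ℕ => 1 / Nf ε n
  -- the main convergence statement
  have main : Tendsto (fun n : ℕ => Nf ε n *
      (∫ w : ℂ, Real.exp (-‖w‖ ^ 2) *
          ((gaussianReal 0 (1/2)) {x : ℝ | |x| ≤
              π * sg n * ‖w‖ / Nf ε n}).toReal *
          ((gaussianReal 0 (1/2)) (Set.Icc (a / (n : ℝ)) (b / (n : ℝ)))).toReal / π)) atTop
      (𝓝 (Real.sqrt (π / 3) * (b - a))) := by
    have hmeas : ∀ᶠ n : ℕ in atTop, AEStronglyMeasurable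
        (fun w : ℂ => Nf ε n * (Real.exp (-‖w‖ ^ 2) *
          ((gaussianReal 0 (1/2)) {x : ℝ | |x| ≤
              π * sg n * ‖w‖ / Nf ε n}).toReal *
          ((gaussianReal 0 (1/2)) (Set.Icc (a / (n : ℝ)) (b / (n : ℝ)))).toReal / π))
        volume := by
      refine Eventually.of_forall (fun n => ?_)
      have h1 : Measurable fun w : ℂ => Real.exp (-‖w‖ ^ 2) :=
        (Real.continuous_exp.comp
          (((continuous_pow 2).comp continuous_norm).neg)).measurable
      exact ((((h1.mul (P1_meas ε n)).mul_const _).div_const π).const_mul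
        (Nf ε n)).aestronglyMeasurable
    have hbound : ∀ᶠ n : ℕ in atTop, ∀ᵐ w : ℂ ∂volume,
        ‖Nf ε n * (Real.exp (-‖w‖ ^ 2) *
          ((gaussianReal 0 (1/2)) {x : ℝ | |x| ≤
              π * sg n * ‖w‖ / Nf ε n}).toReal *
          ((gaussianReal 0 (1/2)) (Set.Icc (a / (n : ℝ)) (b / (n : ℝ)))).toReal / π)‖
          ≤ 2*(b-a)/π * (Real.exp (-‖w‖ ^ 2) * ‖w‖) := by
      filter_upwards [hev2, eventually_ge_atTop 1] with n hN2 hn1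
      refine Eventually.of_forall (fun w => ?_)
      have hn0 : (0:ℝ) < n := by exact_mod_cast hn1
      have hNpos : (0:ℝ) < Nf ε n := by linarith
      have hsg0 : 0 ≤ sg n := Real.sqrt_nonneg _
      have habs : (0:ℝ) ≤ ‖w‖ := norm_nonneg w
      have hr0 : 0 ≤ π * sg n * ‖w‖ / Nf ε n := by positivity
      have hle : a/(n:ℝ) ≤ b/(n:ℝ) := by gcongr
      have hP1le : ((gaussianReal 0 (1/2)) {x : ℝ | |x| ≤
              π * sg n * ‖w‖ / Nf ε n}).toReal
          ≤ 2*(π * sg n * ‖w‖)/(Nf ε n * Real.sqrt π) := by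
        rw [gauss_abs _ hr0]
        calc (∫ x in (-(π * sg n * ‖w‖ / Nf ε n))..(π * sg n * ‖w‖ / Nf ε n),
              gpdf x)
            ≤ ((π * sg n * ‖w‖ / Nf ε n) - -(π * sg n * ‖w‖ / Nf ε n))
              / Real.sqrt π := gauss_integral_le _ _ (by linarith)
          _ = 2*(π * sg n * ‖w‖)/(Nf ε n * Real.sqrt π) := by
              field_simp
              ring
      have hP1nn : (0:ℝ) ≤ ((gaussianReal 0 (1/2)) {x : ℝ | |x| ≤
              π * sg n * ‖w‖ / Nf ε n}).toReal := ENNReal.toReal_nonneg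
      have hP2le : ((gaussianReal 0 (1/2)) (Set.Icc (a / (n:ℝ)) (b / (n:ℝ)))).toReal
          ≤ (b-a)/((n:ℝ)*Real.sqrt π) := by
        rw [gauss_Icc _ _ hle]
        calc (∫ x in a/(n:ℝ)..b/(n:ℝ), gpdf x) ≤ (b/(n:ℝ) - a/(n:ℝ))/Real.sqrt π :=
              gauss_integral_le _ _ hle
          _ = (b-a)/((n:ℝ)*Real.sqrt π) := by field_simp
      have hP2nn : (0:ℝ) ≤ ((gaussianReal 0 (1/2))
          (Set.Icc (a / (n:ℝ)) (b / (n:ℝ)))).toReal := ENNReal.toReal_nonneg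
      have hE0 : (0:ℝ) ≤ Real.exp (-‖w‖ ^ 2) := (Real.exp_pos _).le
      have hG0 : (0:ℝ) ≤ Nf ε n * (Real.exp (-‖w‖ ^ 2) *
          ((gaussianReal 0 (1/2)) {x : ℝ | |x| ≤
              π * sg n * ‖w‖ / Nf ε n}).toReal *
          ((gaussianReal 0 (1/2)) (Set.Icc (a / (n : ℝ)) (b / (n : ℝ)))).toReal / π) := by
        apply mul_nonneg hNpos.le
        apply div_nonneg _ pi_pos.le
        exact mul_nonneg (mul_nonneg hE0 hP1nn) hP2nn
      rw [Real.norm_eq_abs, abs_of_nonneg hG0]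
      have h12 : ((gaussianReal 0 (1/2)) {x : ℝ | |x| ≤
              π * sg n * ‖w‖ / Nf ε n}).toReal *
            ((gaussianReal 0 (1/2)) (Set.Icc (a / (n:ℝ)) (b / (n:ℝ)))).toReal
          ≤ (2*(π * sg n * ‖w‖)/(Nf ε n * Real.sqrt π))
            * ((b-a)/((n:ℝ)*Real.sqrt π)) :=
        mul_le_mul hP1le hP2le hP2nn (by positivity)
      have hfin : Nf ε n * (Real.exp (-‖w‖ ^ 2) *
            ((2*(π * sg n * ‖w‖)/(Nf ε n * Real.sqrt π))
              * ((b-a)/((n:ℝ)*Real.sqrt π))) / π)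
          = (sg n/(n:ℝ)) * (2*(b-a)/π * (Real.exp (-‖w‖ ^ 2) * ‖w‖)) := by
        have hmm : Real.sqrt π * Real.sqrt π = π := Real.mul_self_sqrt pi_pos.le
        field_simp
        ring_nf
        rw [Real.sq_sqrt pi_pos.le]
        ring
      have hσ1 : sg n/(n:ℝ) ≤ 1 := (div_le_one hn0).mpr (sg_le n hn1)
      have hX0 : (0:ℝ) ≤ 2*(b-a)/π * (Real.exp (-‖w‖ ^ 2) * ‖w‖) :=
        mul_nonneg (div_nonneg (by linarith) pi_pos.le) (mul_nonneg hE0 habs)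
      calc Nf ε n * (Real.exp (-‖w‖ ^ 2) *
            ((gaussianReal 0 (1/2)) {x : ℝ | |x| ≤
                π * sg n * ‖w‖ / Nf ε n}).toReal *
            ((gaussianReal 0 (1/2)) (Set.Icc (a / (n : ℝ)) (b / (n : ℝ)))).toReal / π)
          = Nf ε n * (Real.exp (-‖w‖ ^ 2) *
            (((gaussianReal 0 (1/2)) {x : ℝ | |x| ≤
                π * sg n * ‖w‖ / Nf ε n}).toReal *
            ((gaussianReal 0 (1/2)) (Set.Icc (a / (n : ℝ)) (b / (n : ℝ)))).toReal) / π) := by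
            ring
        _ ≤ Nf ε n * (Real.exp (-‖w‖ ^ 2) *
            ((2*(π * sg n * ‖w‖)/(Nf ε n * Real.sqrt π))
              * ((b-a)/((n:ℝ)*Real.sqrt π))) / π) := by
            apply mul_le_mul_of_nonneg_left _ hNpos.le
            apply div_le_div_of_nonneg_right _ pi_pos.le
            exact mul_le_mul_of_nonneg_left h12 hE0
        _ = (sg n/(n:ℝ)) * (2*(b-a)/π * (Real.exp (-‖w‖ ^ 2) * ‖w‖)) := hfin
        _ ≤ 1 * (2*(b-a)/π * (Real.exp (-‖w‖ ^ 2) * ‖w‖)) :=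
            mul_le_mul_of_nonneg_right hσ1 hX0
        _ = 2*(b-a)/π * (Real.exp (-‖w‖ ^ 2) * ‖w‖) := one_mul _
    have hbi : Integrable (fun w : ℂ =>
        2*(b-a)/π * (Real.exp (-‖w‖ ^ 2) * ‖w‖)) volume :=
      integrable_bound.const_mul _
    have hlim : ∀ᵐ w : ℂ ∂volume, Tendsto (fun n : ℕ =>
        Nf ε n * (Real.exp (-‖w‖ ^ 2) *
          ((gaussianReal 0 (1/2)) {x : ℝ | |x| ≤
              π * sg n * ‖w‖ / Nf ε n}).toReal *
          ((gaussianReal 0 (1/2)) (Set.Icc (a / (n : ℝ)) (b / (n : ℝ)))).toReal / π)) atTop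
        (𝓝 (Real.exp (-‖w‖ ^ 2)
          * (2*π*(Real.sqrt 3)⁻¹*‖w‖/Real.sqrt π) * ((b-a)/Real.sqrt π) / π)) := by
      refine Eventually.of_forall (fun w => ?_)
      have habs : (0:ℝ) ≤ ‖w‖ := norm_nonneg w
      have hmain : Tendsto (fun n : ℕ => 2*(π * sg n * ‖w‖)/((n:ℝ)*Real.sqrt π))
          atTop (𝓝 (2*π*(Real.sqrt 3)⁻¹*‖w‖/Real.sqrt π)) := by
        have h1 := ((sg_tendsto.const_mul (2*π)).mul_const (‖w‖)).div_const
          (Real.sqrt π)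
        refine h1.congr (fun n => ?_)
        simp only [div_eq_mul_inv, mul_inv]
        ring
      have hnN := hnN_tendsto ε hε (by linarith)
      have hr : Tendsto (fun n : ℕ => π * sg n * ‖w‖ / Nf ε n) atTop (𝓝 0) := by
        have h1 := ((sg_tendsto.const_mul π).mul_const (‖w‖)).mul hnN
        have h2 : Tendsto (fun n : ℕ => π * (sg n / (n:ℝ)) * ‖w‖ * ((n:ℝ) / Nf ε n))
            atTop (𝓝 0) := by simpa using h1
        refine Tendsto.congr' ?_ h2
        filter_upwards [eventually_ge_atTop 1, hev2] with n hn1 hN2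
        have hn0 : ((n:ℝ)) ≠ 0 := by
          have : (0:ℝ) < n := by exact_mod_cast hn1
          exact this.ne'
        have hN0 : Nf ε n ≠ 0 := by linarith
        field_simp
      have hr2 : Tendsto (fun n : ℕ => (π * sg n * ‖w‖ / Nf ε n)^2) atTop (𝓝 0) := by
        simpa [pow_two] using hr.mul hr
      have hBd : ∀ᶠ n : ℕ in atTop,
          ‖Nf ε n * ((gaussianReal 0 (1/2)) {x : ℝ | |x| ≤
              π * sg n * ‖w‖ / Nf ε n}).toReal / (n:ℝ)
            - 2*(π * sg n * ‖w‖)/((n:ℝ)*Real.sqrt π)‖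
          ≤ 2*(π * sg n * ‖w‖)/((n:ℝ)*Real.sqrt π)
            * ((π * sg n * ‖w‖ / Nf ε n))^2 := by
        filter_upwards [hev2, eventually_ge_atTop 1] with n hN2 hn1
        have hn0 : (0:ℝ) < n := by exact_mod_cast hn1
        have hNpos : (0:ℝ) < Nf ε n := by linarith
        have hsg0 : 0 ≤ sg n := Real.sqrt_nonneg _
        have hr0 : 0 ≤ π * sg n * ‖w‖ / Nf ε n := by positivity
        rw [Real.norm_eq_abs]
        exact B_est (Nf ε n) (n:ℝ) (π * sg n * ‖w‖) _ hNpos hn0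
          (by positivity) (gauss_abs _ hr0)
      have hbnd0 : Tendsto (fun n : ℕ =>
          2*(π * sg n * ‖w‖)/((n:ℝ)*Real.sqrt π)
            * ((π * sg n * ‖w‖ / Nf ε n))^2) atTop (𝓝 0) := by
        simpa using hmain.mul hr2
      have h0 := squeeze_zero_norm' hBd hbnd0
      have hB : Tendsto (fun n : ℕ => Nf ε n * ((gaussianReal 0 (1/2)) {x : ℝ | |x| ≤
            π * sg n * ‖w‖ / Nf ε n}).toReal / (n:ℝ)) atTop
          (𝓝 (2*π*(Real.sqrt 3)⁻¹*‖w‖/Real.sqrt π)) := by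
        have h1 := h0.add hmain
        simpa using h1
      have hA := hA_tendsto a b hab
      have hcomb := ((hB.const_mul (Real.exp (-‖w‖ ^ 2))).mul hA).div_const π
      refine Tendsto.congr' ?_ hcomb
      filter_upwards [eventually_ge_atTop 1] with n hn1
      have hn0 : ((n:ℝ)) ≠ 0 := by
        have : (0:ℝ) < n := by exact_mod_cast hn1
        exact this.ne'
      field_simp
    have hDCT := tendsto_integral_filter_of_dominated_convergence (μ := volume)
      (F := fun (n : ℕ) (w : ℂ) => Nf ε n * (Real.exp (-‖w‖ ^ 2) *
          ((gaussianReal 0 (1/2)) {x : ℝ | |x| ≤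
              π * sg n * ‖w‖ / Nf ε n}).toReal *
          ((gaussianReal 0 (1/2)) (Set.Icc (a / (n : ℝ)) (b / (n : ℝ)))).toReal / π))
      (f := fun w : ℂ => Real.exp (-‖w‖ ^ 2)
          * (2*π*(Real.sqrt 3)⁻¹*‖w‖/Real.sqrt π) * ((b-a)/Real.sqrt π) / π)
      (fun w : ℂ => 2*(b-a)/π * (Real.exp (-‖w‖ ^ 2) * ‖w‖))
      hmeas hbound hbi hlim
    rw [flim_integral a b] at hDCT
    exact hDCT.congr (fun n => integral_const_mul _ _)
  refine (isLittleO_iff_tendsto' ?_).mpr ?_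
  · filter_upwards [hev2] with n hn
    intro h0
    exfalso
    have hp : (0:ℝ) < 1 / Nf ε n := one_div_pos.mpr (by linarith)
    linarith [hp, h0.symm.le]
  · have hT := main.sub_const (Real.sqrt (π/3)*(b-a))
    rw [sub_self] at hT
    refine Tendsto.congr' ?_ hT
    filter_upwards [hev2] with n hn
    have hN0 : Nf ε n ≠ 0 := by linarith
    rw [one_div (Nf ε n), div_inv_eq_mul, sub_mul, div_mul_cancel₀ _ hN0]; ring
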